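/- arXiv:1907.12676 — 3 statements merged into one kernel-verified Lean document; each statement's English description precedes it below -/
import Mathlib

section
/- Let α ∈ (0,2], M > 0, d ≥ 1, and ξ ∈ ℝ^d with ‖ξ‖² > M^{2/α}. Then (‖ξ‖² + M^{2/α})^{α/2} − M ≥ (α / 2^{2 − α/2}) · ‖ξ‖^α. -/
/-- High-frequency (α-stable) regime bound: if `‖ξ‖² > M^{2/α}` then
`(‖ξ‖² + M^{2/α})^{α/2} − M ≥ (α / 2^{2−α/2}) ‖ξ‖^α`. -/
theorem stmt3 (α M : ℝ) (hα0 : 0 < α) (hα2 : α ≤ 2) (hM : 0 < M)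
    (d : ℕ) (hd : 1 ≤ d) (ξ : EuclideanSpace ℝ (Fin d))
    (hξ : ‖ξ‖ ^ 2 > M ^ (2 / α)) :
    (‖ξ‖ ^ 2 + M ^ (2 / α)) ^ (α / 2) - M ≥
      α / (2 : ℝ) ^ (2 - α / 2) * ‖ξ‖ ^ α := by
  set p : ℝ := α / 2 with hp
  have hα : α ≠ 0 := ne_of_gt hα0
  have hp0 : 0 < p := by positivity
  have hp1 : p ≤ 1 := by rw [hp]; linarith
  set m : ℝ := M ^ (2 / α) with hm
  have hm0 : 0 < m := Real.rpow_pos_of_pos hM _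
  set x : ℝ := ‖ξ‖ ^ 2 with hx
  have hxm : m < x := hξ
  have hx0 : 0 < x := lt_trans hm0 hxm
  have hxm0 : 0 < x + m := by linarith
  -- M = m ^ p
  have hMeq : M = m ^ p := by
    rw [hm, ← Real.rpow_mul hM.le]
    rw [show 2 / α * p = 1 by rw [hp]; field_simp]
    rw [Real.rpow_one]
  -- ‖ξ‖ ^ α = x ^ p
  have hξα : ‖ξ‖ ^ α = x ^ p := by
    rw [hx, ← Real.rpow_natCast ‖ξ‖ 2, ← Real.rpow_mul (norm_nonneg ξ)]
    push_cast
    rw [show (2:ℝ) * (α / 2) = α by ring]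
  -- key concavity inequality: m ^ p ≤ (x+m)^p - p * x * (x+m)^(p-1)
  have key : m ^ p ≤ (x + m) ^ p - p * x * (x + m) ^ (p - 1) := by
    have hgm := Real.geom_mean_le_arith_mean2_weighted hp0.le
      (by linarith : (0:ℝ) ≤ 1 - p) (le_of_lt (div_pos hm0 hxm0)) zero_le_one
      (by ring)
    rw [Real.one_rpow, mul_one, mul_one] at hgm
    have h1 : (m / (x + m)) ^ p = m ^ p / (x + m) ^ p :=
      Real.div_rpow hm0.le hxm0.le p
    have hpow : (0:ℝ) < (x + m) ^ p := Real.rpow_pos_of_pos hxm0 p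
    rw [h1, div_le_iff₀ hpow] at hgm
    have h2 : (x + m) ^ (p - 1) = (x + m) ^ p / (x + m) := by
      rw [Real.rpow_sub hxm0, Real.rpow_one]
    rw [h2]
    calc m ^ p ≤ (p * (m / (x + m)) + (1 - p)) * (x + m) ^ p := hgm
      _ = (x + m) ^ p - p * x * ((x + m) ^ p / (x + m)) := by
          field_simp; ring
  -- monotonicity: (x+m)^(p-1) ≥ (2x)^(p-1)
  have mono : (2 * x) ^ (p - 1) ≤ (x + m) ^ (p - 1) := by
    apply Real.rpow_le_rpow_of_nonpos hxm0 (by linarith) (by linarith)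
  have h2x : (2 * x) ^ (p - 1) = 2 ^ (p - 1) * x ^ (p - 1) :=
    Real.mul_rpow (by norm_num) hx0.le
  have hxp : x ^ (p - 1) * x = x ^ p := by
    calc x ^ (p - 1) * x = x ^ (p - 1) * x ^ (1:ℝ) := by rw [Real.rpow_one]
      _ = x ^ (p - 1 + 1) := (Real.rpow_add hx0 _ _).symm
      _ = x ^ p := by ring_nf
  -- constants: α / 2^(2-p) = p * 2^(p-1)
  have hconst : α / (2 : ℝ) ^ (2 - p) = p * 2 ^ (p - 1) := by
    rw [Real.rpow_sub (by norm_num : (0:ℝ) < 2), Real.rpow_sub (by norm_num : (0:ℝ) < 2)]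
    rw [Real.rpow_one, show ((2:ℝ)^(2:ℝ)) = 4 by
      rw [show (2:ℝ) = ((2:ℕ):ℝ) by norm_num, Real.rpow_natCast]; norm_num]
    have h2p : (0:ℝ) < (2:ℝ) ^ p := Real.rpow_pos_of_pos (by norm_num) p
    field_simp [hp]
    ring
  rw [hMeq, hξα, hconst]
  have step : p * 2 ^ (p - 1) * x ^ p ≤ p * x * (x + m) ^ (p - 1) := by
    calc p * 2 ^ (p - 1) * x ^ p = p * x * (2 ^ (p - 1) * x ^ (p - 1)) := by
          rw [← hxp]; ring
      _ = p * x * (2 * x) ^ (p - 1) := by rw [h2x]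
      _ ≤ p * x * (x + m) ^ (p - 1) := by
          apply mul_le_mul_of_nonneg_left mono (by positivity)
  linarith
end

section
/- Fix α ∈ (0,2] and d ≥ 1. For M > 0, t > 0 and x, y ∈ ℝ^d define the relativistic stable transition kernel p_t^M(x,y) = (2π)^{−d} ∫_{ℝ^d} exp(i (x−y)·ξ) · exp(−t·((M^{2/α} + ‖ξ‖²)^{α/2} − M)) dξ. Then there exists a constant c₁ > 0, depending only on α and d, such that for all M > 0, all t > 0 and all x, y ∈ ℝ^d, ‖p_t^M(x,y)‖ ≤ c₁ · (M^{d/α − d/2} · t^{−d/2} + t^{−d/α}). -/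
set_option maxHeartbeats 1000000

open MeasureTheory Real


lemma aux_pow_le (x : ℝ) (hx : 0 ≤ x) (n : ℕ) : x ^ n ≤ n.factorial * Real.exp x := by
  have h := Real.sum_le_exp_of_nonneg hx (n + 1)
  have h2 : x ^ n / n.factorial ≤ ∑ i ∈ Finset.range (n+1), x ^ i / i.factorial := by
    refine Finset.single_le_sum (f := fun i => x ^ i / (i.factorial : ℝ)) (fun i _ => by positivity)
      (Finset.self_mem_range_succ n)
  have hn : (0:ℝ) < n.factorial := by exact_mod_cast n.factorial_pos
  calc x ^ n = n.factorial * (x ^ n / n.factorial) := by field_simp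
    _ ≤ n.factorial * Real.exp x := by
        exact mul_le_mul_of_nonneg_left (h2.trans h) hn.le

lemma aux_integrable {d : ℕ} {c p : ℝ} (hc : 0 < c) (hp : 0 < p) :
    Integrable (fun x : EuclideanSpace ℝ (Fin d) => Real.exp (-(c * ‖x‖ ^ p))) := by
  set n : ℕ := ⌈((d:ℝ) + 1) / p⌉₊ with hn
  set C : ℝ := 2 ^ (d+1) * (1 + n.factorial / c ^ n) with hC
  have hC0 : 0 < C := by positivity
  have hfin : (Module.finrank ℝ (EuclideanSpace ℝ (Fin d)) : ℝ) < (d:ℝ) + 1 := by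
    rw [finrank_euclideanSpace_fin]; linarith
  refine ((integrable_one_add_norm hfin).const_mul C).mono'
    (Measurable.aestronglyMeasurable (by fun_prop)) (Filter.Eventually.of_forall fun x => ?_) 
  rw [Real.norm_eq_abs, abs_of_nonneg (Real.exp_nonneg _)]
  set r : ℝ := ‖x‖ with hr
  have hr0 : 0 ≤ r := norm_nonneg x
  -- goal: exp(-(c r^p)) ≤ C * (1+r)^(-(d+1))
  have key : (1 + r) ^ ((d:ℝ)+1) ≤ C * Real.exp (c * r ^ p) := by
    rcases le_total r 1 with h1 | h1
    · calc (1 + r) ^ ((d:ℝ)+1) ≤ 2 ^ ((d:ℝ)+1) := by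
            apply Real.rpow_le_rpow (by linarith) (by linarith) (by positivity)
        _ ≤ C * 1 := by
            rw [mul_one, hC]
            have : (2:ℝ) ^ ((d:ℝ)+1) = 2 ^ (d+1) := by
              rw [← Real.rpow_natCast 2 (d+1)]; norm_num
            rw [this]
            have h3 : (0:ℝ) ≤ (n.factorial : ℝ) / c ^ n := by positivity
            nlinarith [pow_pos (show (0:ℝ) < 2 by norm_num) (d+1)]
        _ ≤ C * Real.exp (c * r ^ p) := by
            apply mul_le_mul_of_nonneg_left _ hC0.le
            rw [← Real.exp_zero]
            apply Real.exp_le_exp.2; positivity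
    · have hd1n : (d:ℝ) + 1 ≤ p * n := by
        have : ((d:ℝ)+1)/p ≤ n := Nat.le_ceil _
        calc (d:ℝ)+1 = p * (((d:ℝ)+1)/p) := by field_simp
          _ ≤ p * n := by nlinarith
      calc (1+r) ^ ((d:ℝ)+1) ≤ (2*r) ^ ((d:ℝ)+1) := by
            apply Real.rpow_le_rpow (by linarith) (by linarith) (by positivity)
        _ = 2 ^ ((d:ℝ)+1) * r ^ ((d:ℝ)+1) := Real.mul_rpow (by norm_num) hr0
        _ ≤ 2 ^ ((d:ℝ)+1) * r ^ (p * n) := by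
            apply mul_le_mul_of_nonneg_left _ (by positivity)
            exact Real.rpow_le_rpow_of_exponent_le h1 hd1n
        _ = 2 ^ ((d:ℝ)+1) * (r ^ p) ^ n := by
            rw [Real.rpow_mul hr0, Real.rpow_natCast]
        _ ≤ 2 ^ ((d:ℝ)+1) * ((c * r ^ p) ^ n / c ^ n) := by
            apply mul_le_mul_of_nonneg_left _ (by positivity)
            rw [mul_pow, mul_comm, mul_div_assoc, div_self (by positivity), mul_one]
        _ ≤ 2 ^ ((d:ℝ)+1) * (n.factorial * Real.exp (c * r ^ p) / c ^ n) := by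
            apply mul_le_mul_of_nonneg_left _ (by positivity)
            apply div_le_div_of_nonneg_right _ (pow_pos hc n).le
            exact aux_pow_le _ (by positivity) n
        _ ≤ C * Real.exp (c * r ^ p) := by
            rw [hC]
            have h2 : (2:ℝ) ^ ((d:ℝ)+1) = 2 ^ (d+1) := by
              rw [← Real.rpow_natCast 2 (d+1)]; norm_num
            rw [h2, mul_assoc]
            apply mul_le_mul_of_nonneg_left _ (by positivity)
            have heq : (n.factorial : ℝ) * Real.exp (c * r ^ p) / c ^ n
                = ((n.factorial : ℝ) / c ^ n) * Real.exp (c * r ^ p) := by ring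
            rw [heq]
            have h3 : (0:ℝ) ≤ (n.factorial : ℝ) / c ^ n := by positivity
            nlinarith [Real.exp_pos (c * r ^ p)]
  -- now convert
  have h1r : (0:ℝ) < 1 + r := by linarith
  have hA : (0:ℝ) < (1 + r) ^ ((d:ℝ)+1) := Real.rpow_pos_of_pos h1r _
  have hcast : -((d:ℝ)+1) = -(((d:ℕ):ℝ)+1) := by norm_num
  rw [show -(c * r ^ p) = -(c * r ^ p) from rfl, Real.exp_neg, Real.rpow_neg h1r.le,
    ← div_eq_mul_inv, le_div_iff₀ hA, inv_mul_eq_div, div_le_iff₀ (Real.exp_pos _)]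
  exact key


lemma aux_scaling {d : ℕ} {p s : ℝ} (hp : 0 < p) (hs : 0 < s) :
    ∫ x : EuclideanSpace ℝ (Fin d), Real.exp (-(s * ‖x‖ ^ p))
      = s ^ (-(d:ℝ)/p) * ∫ x : EuclideanSpace ℝ (Fin d), Real.exp (-‖x‖ ^ p) := by
  set R : ℝ := s ^ (-1/p) with hR
  have hR0 : 0 < R := Real.rpow_pos_of_pos hs _
  have key := MeasureTheory.Measure.integral_comp_smul_of_nonneg
    (volume : Measure (EuclideanSpace ℝ (Fin d)))
    (fun x => Real.exp (-(s * ‖x‖ ^ p))) R (hR := hR0.le)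
  have hcomp : ∀ x : EuclideanSpace ℝ (Fin d),
      Real.exp (-(s * ‖R • x‖ ^ p)) = Real.exp (-‖x‖ ^ p) := by
    intro x
    congr 1
    rw [norm_smul, Real.norm_eq_abs, abs_of_nonneg hR0.le,
      Real.mul_rpow hR0.le (norm_nonneg x), hR, ← Real.rpow_mul hs.le]
    rw [show -1/p*p = -1 by field_simp, Real.rpow_neg_one]
    field_simp
  simp only [hcomp] at key
  rw [finrank_euclideanSpace_fin] at key
  have hRd : (0:ℝ) < R ^ d := pow_pos hR0 d
  have h2 : ∫ x : EuclideanSpace ℝ (Fin d), Real.exp (-(s * ‖x‖ ^ p))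
      = R ^ d * ∫ x : EuclideanSpace ℝ (Fin d), Real.exp (-‖x‖ ^ p) := by
    rw [key, smul_eq_mul]; field_simp
  rw [h2]
  congr 1
  rw [hR, ← Real.rpow_natCast (s ^ (-1/p)) d, ← Real.rpow_mul hs.le]
  congr 1
  field_simp


lemma aux_c0_pos {β : ℝ} (hβ0 : 0 < β) : 0 < min (1 - 2^(-β)) ((2:ℝ)^β - 1) := by
  have h1 : (2:ℝ)^(-β) < 2^(0:ℝ) := Real.rpow_lt_rpow_of_exponent_lt one_lt_two (by linarith)
  have h2 : (2:ℝ)^(0:ℝ) < 2^β := Real.rpow_lt_rpow_of_exponent_lt one_lt_two hβ0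
  rw [Real.rpow_zero] at h1 h2
  exact lt_min (by linarith) (by linarith)

lemma aux_key {β m s : ℝ} (hβ0 : 0 < β) (hβ1 : β ≤ 1) (hm : 0 < m) (hs : 0 ≤ s) :
    min (1 - 2^(-β)) ((2:ℝ)^β - 1) * min (s ^ β) (m ^ (β-1) * s)
      ≤ (m+s)^β - m^β := by
  set c₀ := min (1 - 2^(-β)) ((2:ℝ)^β - 1) with hc₀
  have hc₀pos := aux_c0_pos hβ0
  have h2β1 : (2:ℝ)^(-β) ≤ 1 := by nlinarith [min_le_left (1 - (2:ℝ)^(-β)) ((2:ℝ)^β - 1)]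
  rcases le_total m s with hms | hms
  · -- m ≤ s : use s^β bound
    have hmin : min (s ^ β) (m ^ (β-1) * s) ≤ s ^ β := min_le_left _ _
    have h1 : m ^ β ≤ 2^(-β) * (m+s)^β := by
      have : (2:ℝ)^(-β) * (m+s)^β = ((m+s)/2)^β := by
        rw [Real.div_rpow (by linarith) (by norm_num), Real.rpow_neg (by norm_num)]
        ring
      rw [this]
      exact Real.rpow_le_rpow hm.le (by linarith) hβ0.le
    have h2 : s ^ β ≤ (m+s)^β := Real.rpow_le_rpow hs (by linarith) hβ0.le
    have hsβ : (0:ℝ) ≤ s ^ β := Real.rpow_nonneg hs _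
    have hcle : c₀ ≤ 1 - 2^(-β) := min_le_left _ _
    have hcmin : c₀ * min (s ^ β) (m ^ (β-1) * s) ≤ c₀ * s ^ β :=
      mul_le_mul_of_nonneg_left hmin hc₀pos.le
    calc c₀ * min (s ^ β) (m ^ (β-1) * s) ≤ c₀ * s ^ β := hcmin
      _ ≤ (1 - 2^(-β)) * s ^ β := mul_le_mul_of_nonneg_right hcle hsβ
      _ ≤ (1 - 2^(-β)) * (m+s)^β := mul_le_mul_of_nonneg_left h2 (by linarith)
      _ ≤ (m+s)^β - m ^ β := by nlinarith [Real.rpow_nonneg (show (0:ℝ) ≤ m+s by linarith) β]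
  · -- s ≤ m : concavity
    have hmin : min (s ^ β) (m ^ (β-1) * s) ≤ m ^ (β-1) * s := min_le_right _ _
    have hcle : c₀ ≤ (2:ℝ)^β - 1 := min_le_right _ _
    have hmβ1 : (0:ℝ) ≤ m ^ (β-1) * s := mul_nonneg (Real.rpow_nonneg hm.le _) hs
    have hconc := (Real.concaveOn_rpow hβ0.le hβ1).2
      (Set.mem_Ici.2 hm.le) (Set.mem_Ici.2 (by linarith : (0:ℝ) ≤ 2*m))
      (show (0:ℝ) ≤ 1 - s/m by rw [sub_nonneg]; exact div_le_one_of_le₀ hms hm.le)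
      (show (0:ℝ) ≤ s/m by positivity)
      (by ring)
    simp only [smul_eq_mul] at hconc
    have he1 : (1 - s/m) * m + s/m * (2*m) = m + s := by field_simp; ring
    rw [he1] at hconc
    have he2 : (2*m)^β = 2^β * m^β := Real.mul_rpow (by norm_num) hm.le
    have he3 : m ^ (β-1) = m ^ β / m := Real.rpow_sub_one hm.ne' β
    have key : m ^ β + ((2:ℝ)^β - 1) * (m ^ (β-1) * s) ≤ (m+s)^β := by
      have : (1 - s/m) * m^β + s/m * ((2*m)^β) 
          = m ^ β + ((2:ℝ)^β - 1) * (m ^ (β-1) * s) := by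
        rw [he2, he3]; field_simp; ring
      linarith [hconc, this.symm.le, this.le]
    calc c₀ * min (s ^ β) (m ^ (β-1) * s) ≤ c₀ * (m ^ (β-1) * s) :=
          mul_le_mul_of_nonneg_left hmin hc₀pos.le
      _ ≤ ((2:ℝ)^β - 1) * (m ^ (β-1) * s) := mul_le_mul_of_nonneg_right hcle hmβ1
      _ ≤ (m+s)^β - m^β := by linarith

lemma aux_gauss {d : ℕ} {b : ℝ} (hb : 0 < b) :
    ∫ v : EuclideanSpace ℝ (Fin d), Real.exp (-(b * ‖v‖ ^ 2))
      = Real.pi ^ ((d:ℝ)/2) * b ^ (-(d:ℝ)/2) := by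
  have h := GaussianFourier.integral_rexp_neg_mul_sq_norm
    (V := EuclideanSpace ℝ (Fin d)) hb
  simp only [neg_mul] at h
  rw [h, finrank_euclideanSpace_fin]
  rw [Real.div_rpow Real.pi_pos.le hb.le, neg_div, Real.rpow_neg hb.le, div_eq_mul_inv]

/-- Theorem 2.1 of the paper: the relativistic stable transition kernel
`p_t^M(x,y) = (2π)^{−d} ∫ exp(i(x−y)·ξ) exp(−t((M^{2/α}+‖ξ‖²)^{α/2}−M)) dξ`
satisfies `‖p_t^M(x,y)‖ ≤ c₁ (M^{d/α−d/2} t^{−d/2} + t^{−d/α})` with `c₁ = c₁(α,d) > 0`. -/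
theorem stmt6 (α : ℝ) (hα0 : 0 < α) (hα2 : α ≤ 2) (d : ℕ) (hd : 1 ≤ d) :
    ∃ c₁ : ℝ, 0 < c₁ ∧ ∀ M : ℝ, 0 < M → ∀ t : ℝ, 0 < t →
      ∀ x y : EuclideanSpace ℝ (Fin d),
        ‖(((((2 * Real.pi) ^ d)⁻¹ : ℝ) : ℂ) *
            ∫ ξ : EuclideanSpace ℝ (Fin d),
              Complex.exp (Complex.I * ((inner ℝ (x - y) ξ : ℝ) : ℂ)) *
                Complex.exp (-(((t * ((M ^ (2 / α) + ‖ξ‖ ^ 2) ^ (α / 2) - M)) : ℝ) : ℂ)))‖ ≤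
          c₁ * (M ^ ((d : ℝ) / α - (d : ℝ) / 2) * t ^ (-(d : ℝ) / 2) + t ^ (-(d : ℝ) / α)) := by
  set β : ℝ := α/2 with hβ
  have hβ0 : 0 < β := by positivity
  have hβ1 : β ≤ 1 := by rw [hβ]; linarith
  set c₀ : ℝ := min (1 - 2^(-β)) ((2:ℝ)^β - 1) with hc₀def
  have hc₀ : 0 < c₀ := aux_c0_pos hβ0
  set K : ℝ := ∫ x : EuclideanSpace ℝ (Fin d), Real.exp (-‖x‖ ^ α) with hKdef
  have hK0 : 0 ≤ K := integral_nonneg fun x => (Real.exp_pos _).le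
  set A : ℝ := c₀ ^ (-(d:ℝ)/α) * K with hAdef
  set B : ℝ := Real.pi ^ ((d:ℝ)/2) * c₀ ^ (-(d:ℝ)/2) with hBdef
  have hA0 : 0 ≤ A := mul_nonneg (Real.rpow_nonneg hc₀.le _) hK0
  have hB0 : 0 ≤ B := mul_nonneg (Real.rpow_nonneg Real.pi_pos.le _)
    (Real.rpow_nonneg hc₀.le _)
  set P : ℝ := ((2 * Real.pi) ^ d)⁻¹ with hPdef
  have hP0 : 0 < P := by positivity
  refine ⟨P * (A + B) + 1, by positivity, fun M hM t ht x y => ?_⟩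
  set m : ℝ := M ^ (2/α) with hmdef
  have hm : 0 < m := Real.rpow_pos_of_pos hM _
  have hmβM : m ^ β = M := by
    rw [hmdef, ← Real.rpow_mul hM.le, show 2/α * β = 1 by rw [hβ]; field_simp,
      Real.rpow_one]
  set m' : ℝ := M ^ (1 - 2/α) with hm'def
  have hm' : 0 < m' := Real.rpow_pos_of_pos hM _
  have hmβ1 : m ^ (β - 1) = m' := by
    rw [hmdef, ← Real.rpow_mul hM.le, hm'def]
    congr 1
    rw [hβ]; field_simp
  -- step 1 : norm of the constant
  rw [norm_mul, Complex.norm_real, Real.norm_eq_abs, abs_of_nonneg hP0.le]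
  -- step 2 : bound norm of integral by integral of exp
  have hnorm : ∀ ξ : EuclideanSpace ℝ (Fin d),
      ‖Complex.exp (Complex.I * ((inner ℝ (x - y) ξ : ℝ) : ℂ)) *
        Complex.exp (-(((t * ((m + ‖ξ‖ ^ 2) ^ β - M)) : ℝ) : ℂ))‖
      = Real.exp (-(t * ((m + ‖ξ‖ ^ 2) ^ β - M))) := by
    intro ξ
    rw [norm_mul, Complex.norm_exp, Complex.norm_exp]
    simp [Complex.mul_re]
  have step2 : ‖∫ ξ : EuclideanSpace ℝ (Fin d),
      Complex.exp (Complex.I * ((inner ℝ (x - y) ξ : ℝ) : ℂ)) *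
        Complex.exp (-(((t * ((m + ‖ξ‖ ^ 2) ^ β - M)) : ℝ) : ℂ))‖
      ≤ ∫ ξ : EuclideanSpace ℝ (Fin d), Real.exp (-(t * ((m + ‖ξ‖ ^ 2) ^ β - M))) := by
    refine (norm_integral_le_integral_norm _).trans_eq ?_
    exact integral_congr_ae (Filter.Eventually.of_forall hnorm)
  -- step 3 : pointwise domination
  have hpt : ∀ ξ : EuclideanSpace ℝ (Fin d),
      Real.exp (-(t * ((m + ‖ξ‖ ^ 2) ^ β - M)))
        ≤ Real.exp (-(t * c₀ * ‖ξ‖ ^ α)) + Real.exp (-(t * c₀ * m' * ‖ξ‖ ^ (2:ℝ))) := by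
    intro ξ
    set s : ℝ := ‖ξ‖ ^ 2 with hsdef
    have hs0 : 0 ≤ s := by positivity
    have hsβ : s ^ β = ‖ξ‖ ^ α := by
      rw [hsdef, ← Real.rpow_natCast ‖ξ‖ 2, ← Real.rpow_mul (norm_nonneg ξ)]
      norm_num
      rw [hβ]; congr 1; ring
    have hkey := aux_key hβ0 hβ1 hm hs0
    rw [← hc₀def] at hkey
    have hξ2 : ‖ξ‖ ^ (2:ℝ) = s := by
      rw [hsdef, ← Real.rpow_natCast ‖ξ‖ 2]; norm_num
    rcases le_total (s ^ β) (m ^ (β-1) * s) with hmin | hmin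
    · have h1 : t * c₀ * ‖ξ‖ ^ α ≤ t * ((m + s) ^ β - M) := by
        rw [← hsβ, ← hmβM, mul_assoc]
        rw [min_eq_left hmin] at hkey
        exact mul_le_mul_of_nonneg_left hkey ht.le
      exact le_add_of_le_of_nonneg (Real.exp_le_exp.2 (neg_le_neg h1))
        (Real.exp_pos _).le
    · have h1 : t * c₀ * m' * ‖ξ‖ ^ (2:ℝ) ≤ t * ((m + s) ^ β - M) := by
        rw [hξ2, ← hmβM, ← hmβ1, mul_assoc, mul_assoc]
        rw [min_eq_right hmin] at hkey
        exact mul_le_mul_of_nonneg_left hkey ht.le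
      exact le_add_of_nonneg_of_le (Real.exp_pos _).le
        (Real.exp_le_exp.2 (neg_le_neg h1))
  -- integrability of the dominating functions
  have hint1 : Integrable (fun ξ : EuclideanSpace ℝ (Fin d) =>
      Real.exp (-(t * c₀ * ‖ξ‖ ^ α))) := aux_integrable (by positivity) hα0
  have hint2 : Integrable (fun ξ : EuclideanSpace ℝ (Fin d) =>
      Real.exp (-(t * c₀ * m' * ‖ξ‖ ^ (2:ℝ)))) := aux_integrable (by positivity) two_pos
  -- step 4 : integrate
  have step4 : ∫ ξ : EuclideanSpace ℝ (Fin d), Real.exp (-(t * ((m + ‖ξ‖ ^ 2) ^ β - M)))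
      ≤ (∫ ξ : EuclideanSpace ℝ (Fin d), Real.exp (-(t * c₀ * ‖ξ‖ ^ α)))
        + ∫ ξ : EuclideanSpace ℝ (Fin d), Real.exp (-(t * c₀ * m' * ‖ξ‖ ^ (2:ℝ))) := by
    rw [← integral_add hint1 hint2]
    refine integral_mono_of_nonneg (Filter.Eventually.of_forall fun ξ => (Real.exp_pos _).le)
      (hint1.add hint2) (Filter.Eventually.of_forall hpt)
  -- step 5 : evaluate the two integrals
  have hval1 : (∫ ξ : EuclideanSpace ℝ (Fin d), Real.exp (-(t * c₀ * ‖ξ‖ ^ α)))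
      = (t * c₀) ^ (-(d:ℝ)/α) * K := aux_scaling hα0 (by positivity)
  have hval2 : (∫ ξ : EuclideanSpace ℝ (Fin d), Real.exp (-(t * c₀ * m' * ‖ξ‖ ^ (2:ℝ))))
      = Real.pi ^ ((d:ℝ)/2) * (t * c₀ * m') ^ (-(d:ℝ)/2) := by
    have h2 : ∀ ξ : EuclideanSpace ℝ (Fin d), ‖ξ‖ ^ (2:ℝ) = ‖ξ‖ ^ (2:ℕ) := fun ξ => by
      rw [← Real.rpow_natCast ‖ξ‖ 2]; norm_num
    simp_rw [h2]
    exact aux_gauss (by positivity)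
  -- step 6 : final arithmetic
  have hpow1 : (t * c₀) ^ (-(d:ℝ)/α) = t ^ (-(d:ℝ)/α) * c₀ ^ (-(d:ℝ)/α) :=
    Real.mul_rpow ht.le hc₀.le
  have hpow2 : (t * c₀ * m') ^ (-(d:ℝ)/2)
      = t ^ (-(d:ℝ)/2) * c₀ ^ (-(d:ℝ)/2) * M ^ ((d:ℝ)/α - (d:ℝ)/2) := by
    rw [Real.mul_rpow (by positivity) hm'.le, Real.mul_rpow ht.le hc₀.le]
    congr 1
    rw [hm'def, ← Real.rpow_mul hM.le]
    congr 1
    field_simp; ring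
  have htα : 0 < t ^ (-(d:ℝ)/α) := Real.rpow_pos_of_pos ht _
  have ht2 : 0 < t ^ (-(d:ℝ)/2) := Real.rpow_pos_of_pos ht _
  have hM2 : 0 < M ^ ((d:ℝ)/α - (d:ℝ)/2) := Real.rpow_pos_of_pos hM _
  calc P * ‖∫ ξ : EuclideanSpace ℝ (Fin d),
      Complex.exp (Complex.I * ((inner ℝ (x - y) ξ : ℝ) : ℂ)) *
        Complex.exp (-(((t * ((m + ‖ξ‖ ^ 2) ^ β - M)) : ℝ) : ℂ))‖
      ≤ P * ((t * c₀) ^ (-(d:ℝ)/α) * K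
          + Real.pi ^ ((d:ℝ)/2) * (t * c₀ * m') ^ (-(d:ℝ)/2)) := by
        refine mul_le_mul_of_nonneg_left ?_ hP0.le
        refine step2.trans (step4.trans_eq ?_)
        rw [hval1, hval2]
    _ = P * (A * t ^ (-(d:ℝ)/α) + B * (M ^ ((d:ℝ)/α - (d:ℝ)/2) * t ^ (-(d:ℝ)/2))) := by
        rw [hpow1, hpow2, hAdef, hBdef]; ring
    _ ≤ (P * (A + B) + 1) * (M ^ ((d:ℝ)/α - (d:ℝ)/2) * t ^ (-(d:ℝ)/2) + t ^ (-(d:ℝ)/α)) := by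
        nlinarith [mul_pos hM2 ht2, mul_nonneg (mul_nonneg hP0.le hA0) (mul_pos hM2 ht2).le,
          mul_nonneg (mul_nonneg hP0.le hB0) htα.le]
end

section
/- Fix α ∈ (0,2], M > 0 and d ≥ 1, and let p_t^M(x,y) = (2π)^{−d} ∫_{ℝ^d} exp(i (x−y)·ξ) · exp(−t·((M^{2/α} + ‖ξ‖²)^{α/2} − M)) dξ. Then (2π)^d · p_t^M(x,y) has modulus at most ∫_{A₁} exp(−(α t / (2 (2M^{2/α})^{1−α/2})) ‖ξ‖²) dξ + ∫_{A₂} exp(−(α t / 2^{2−α/2}) ‖ξ‖^α) dξ, where A₁ = {ξ ∈ ℝ^d : ‖ξ‖² ≤ M^{2/α}} and A₂ = {ξ ∈ ℝ^d : ‖ξ‖² > M^{2/α}}, for every t > 0 and x, y ∈ ℝ^d. -/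
open MeasureTheory

private lemma bern7 {p x : ℝ} (hp0 : 0 ≤ p) (hp1 : p ≤ 1) (hx : 0 ≤ x) :
    x ^ p ≤ 1 + p * (x - 1) := by
  have h := Real.geom_mean_le_arith_mean2_weighted hp0 (by linarith : (0:ℝ) ≤ 1 - p) hx
    zero_le_one (by ring)
  rw [Real.one_rpow, mul_one] at h
  linarith

private lemma rpow_diff_ge7 {p a b : ℝ} (hp0 : 0 < p) (hp1 : p ≤ 1) (ha : 0 ≤ a)
    (hab : a ≤ b) (hb : 0 < b) :
    p * b ^ (p - 1) * (b - a) ≤ b ^ p - a ^ p := by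
  have h := bern7 hp0.le hp1 (div_nonneg ha hb.le)
  rw [Real.div_rpow ha hb.le] at h
  have hbp : 0 < b ^ p := Real.rpow_pos_of_pos hb p
  have h2 : a ^ p ≤ (1 + p * (a / b - 1)) * b ^ p := by
    have := mul_le_mul_of_nonneg_right h hbp.le
    rwa [div_mul_cancel₀ _ hbp.ne'] at this
  have hb1 : b ^ (p - 1) = b ^ p / b := by
    rw [Real.rpow_sub hb, Real.rpow_one]
  have key : (1 + p * (a / b - 1)) * b ^ p = b ^ p + p * b ^ (p - 1) * (a - b) := by
    rw [hb1]; field_simp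
  rw [key] at h2
  linarith

/-- Case 1 pointwise bound : for `0 ≤ r ≤ M^(2/α)`. -/
private lemma case1_bound7 {α M r : ℝ} (hα0 : 0 < α) (hα2 : α ≤ 2) (hM : 0 < M)
    (hr0 : 0 ≤ r) (hr : r ≤ M ^ (2 / α)) :
    α * r / (2 * (2 * M ^ (2 / α)) ^ (1 - α / 2)) ≤ (M ^ (2 / α) + r) ^ (α / 2) - M := by
  set m : ℝ := M ^ (2 / α) with hm_def
  have hm : 0 < m := Real.rpow_pos_of_pos hM _
  have hαne : α ≠ 0 := hα0.ne'
  have hMm : M = m ^ (α / 2) := by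
    rw [hm_def, ← Real.rpow_mul hM.le, show 2 / α * (α / 2) = 1 by field_simp]
    exact (Real.rpow_one M).symm
  have hp0 : 0 < α / 2 := by linarith
  have hp1 : α / 2 ≤ 1 := by linarith
  have hdiff := rpow_diff_ge7 hp0 hp1 hm.le (by linarith : m ≤ m + r) (by linarith)
  have hmono : (2 * m) ^ (α / 2 - 1) ≤ (m + r) ^ (α / 2 - 1) :=
    Real.rpow_le_rpow_of_nonpos (by linarith) (by linarith) (by linarith)
  have h2m : (0:ℝ) < (2 * m) ^ (1 - α / 2) := Real.rpow_pos_of_pos (by linarith) _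
  have hneg : (2 * m) ^ (α / 2 - 1) = ((2 * m) ^ (1 - α / 2))⁻¹ := by
    rw [show α / 2 - 1 = -(1 - α / 2) by ring, Real.rpow_neg (by linarith)]
  calc α * r / (2 * (2 * m) ^ (1 - α / 2))
      = α / 2 * (2 * m) ^ (α / 2 - 1) * r := by
        rw [hneg]; field_simp
    _ ≤ α / 2 * (m + r) ^ (α / 2 - 1) * r :=
        mul_le_mul_of_nonneg_right (mul_le_mul_of_nonneg_left hmono (by linarith)) hr0
    _ = α / 2 * (m + r) ^ (α / 2 - 1) * ((m + r) - m) := by ring_nf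
    _ ≤ (m + r) ^ (α / 2) - m ^ (α / 2) := hdiff
    _ = (m + r) ^ (α / 2) - M := by rw [← hMm]

/-- Case 2 pointwise bound : for `M^(2/α) < r`. -/
private lemma case2_bound7 {α M r : ℝ} (hα0 : 0 < α) (hα2 : α ≤ 2) (hM : 0 < M)
    (hr : M ^ (2 / α) < r) :
    α * r ^ (α / 2) / 2 ^ (2 - α / 2) ≤ (M ^ (2 / α) + r) ^ (α / 2) - M := by
  set m : ℝ := M ^ (2 / α) with hm_def
  have hm : 0 < m := Real.rpow_pos_of_pos hM _
  have hr0 : 0 < r := lt_trans hm hr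
  have hαne : α ≠ 0 := hα0.ne'
  have hMm : M = m ^ (α / 2) := by
    rw [hm_def, ← Real.rpow_mul hM.le, show 2 / α * (α / 2) = 1 by field_simp]
    exact (Real.rpow_one M).symm
  have hp0 : 0 < α / 2 := by linarith
  have hp1 : α / 2 ≤ 1 := by linarith
  have hdiff := rpow_diff_ge7 hp0 hp1 hm.le (by linarith : m ≤ m + r) (by linarith)
  have hmono : (2 * r) ^ (α / 2 - 1) ≤ (m + r) ^ (α / 2 - 1) :=
    Real.rpow_le_rpow_of_nonpos (by linarith) (by linarith) (by linarith)
  have h2r : (2 * r) ^ (α / 2 - 1) = 2 ^ (α / 2 - 1) * r ^ (α / 2 - 1) :=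
    Real.mul_rpow (by norm_num) hr0.le
  have hrr : r ^ (α / 2 - 1) * r = r ^ (α / 2) := by
    rw [Real.rpow_sub hr0, Real.rpow_one]
    field_simp
  have h2e : (2:ℝ) ^ (α / 2 - 1) = 2 * (2 ^ (2 - α / 2))⁻¹ := by
    rw [← Real.rpow_neg (by norm_num : (0:ℝ) ≤ 2),
      show (2:ℝ) * 2 ^ (-(2 - α / 2)) = 2 ^ (1:ℝ) * 2 ^ (-(2 - α / 2)) by norm_num,
      ← Real.rpow_add (by norm_num : (0:ℝ) < 2)]
    congr 1
    ring
  calc α * r ^ (α / 2) / 2 ^ (2 - α / 2)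
      = α / 2 * (2 ^ (α / 2 - 1) * r ^ (α / 2 - 1)) * ((m + r) - m) := by
        rw [h2e]
        have : ((m + r) - m) = r := by ring
        rw [this, mul_assoc, mul_assoc]
        rw [hrr]
        have hpos : (0:ℝ) < 2 ^ (2 - α / 2) := Real.rpow_pos_of_pos (by norm_num) _
        field_simp
    _ = α / 2 * (2 * r) ^ (α / 2 - 1) * ((m + r) - m) := by rw [h2r]
    _ ≤ α / 2 * (m + r) ^ (α / 2 - 1) * ((m + r) - m) :=
        mul_le_mul_of_nonneg_right (mul_le_mul_of_nonneg_left hmono (by linarith)) (by linarith)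
    _ ≤ (m + r) ^ (α / 2) - m ^ (α / 2) := hdiff
    _ = (m + r) ^ (α / 2) - M := by rw [← hMm]

private lemma integrable_exp_neg_mul_rpow7 (d : ℕ) {c β : ℝ} (hc : 0 < c) (hβ : 0 < β) :
    Integrable (fun ξ : EuclideanSpace ℝ (Fin d) => Real.exp (-(c * ‖ξ‖ ^ β))) := by
  set n : ℕ := ⌈(d + 1 : ℝ) / β⌉₊ with hn_def
  have hn : (d + 1 : ℝ) ≤ β * n := by
    have h1 := Nat.le_ceil ((d + 1 : ℝ) / β)
    have := mul_le_mul_of_nonneg_left h1 hβ.le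
    rwa [mul_div_cancel₀ _ hβ.ne'] at this
  set K : ℝ := (n.factorial : ℝ) / c ^ n + 1 with hK_def
  have hK1 : (1:ℝ) ≤ K := le_add_of_nonneg_left (by positivity)
  set C : ℝ := 2 ^ (d + 1) * K with hC_def
  have hCpos : 0 < C := by positivity
  -- the key pointwise bound
  have hbound : ∀ s : ℝ, 0 ≤ s → (1 + s) ^ ((d:ℝ) + 1) ≤ C * Real.exp (c * s ^ β) := by
    intro s hs
    have hexp1 : (1:ℝ) ≤ Real.exp (c * s ^ β) :=
      Real.one_le_exp (by positivity)
    have h2d : ((2:ℝ)) ^ ((d:ℝ) + 1) = (2:ℝ) ^ (d + 1 : ℕ) := by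
      rw [← Real.rpow_natCast 2 (d+1)]; push_cast; ring_nf
    rcases le_total s 1 with hs1 | hs1
    · calc (1 + s) ^ ((d:ℝ) + 1)
          ≤ (2:ℝ) ^ ((d:ℝ) + 1) :=
            Real.rpow_le_rpow (by linarith) (by linarith) (by positivity)
        _ = (2:ℝ) ^ (d + 1 : ℕ) * 1 := by rw [h2d, mul_one]
        _ ≤ (2:ℝ) ^ (d + 1 : ℕ) * (K * Real.exp (c * s ^ β)) := by
            apply mul_le_mul_of_nonneg_left _ (by positivity)
            calc (1:ℝ) ≤ K := hK1
              _ = K * 1 := (mul_one K).symm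
              _ ≤ K * Real.exp (c * s ^ β) :=
                mul_le_mul_of_nonneg_left hexp1 (by linarith)
        _ = C * Real.exp (c * s ^ β) := by rw [hC_def]; ring
    · have hs0 : 0 < s := by linarith
      have hfact := Real.pow_div_factorial_le_exp (x := c * s ^ β) (by positivity) n
      have hcn : (0:ℝ) < c ^ n := by positivity
      have hsn : (s ^ β) ^ n ≤ (n.factorial : ℝ) / c ^ n * Real.exp (c * s ^ β) := by
        rw [div_mul_eq_mul_div, le_div_iff₀ hcn]
        have : (c * s ^ β) ^ n = c ^ n * (s ^ β) ^ n := by rw [mul_pow]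
        have hfact' : (c * s ^ β) ^ n ≤ (n.factorial : ℝ) * Real.exp (c * s ^ β) := by
          rw [div_le_iff₀ (by positivity : (0:ℝ) < (n.factorial : ℝ))] at hfact
          linarith [hfact]
        calc (s ^ β) ^ n * c ^ n = (c * s ^ β) ^ n := by rw [mul_pow]; ring
          _ ≤ (n.factorial : ℝ) * Real.exp (c * s ^ β) := hfact'
      calc (1 + s) ^ ((d:ℝ) + 1)
          ≤ (2 * s) ^ ((d:ℝ) + 1) :=
            Real.rpow_le_rpow (by linarith) (by linarith) (by positivity)
        _ = (2:ℝ) ^ ((d:ℝ) + 1) * s ^ ((d:ℝ) + 1) :=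
            Real.mul_rpow (by norm_num) hs0.le
        _ ≤ (2:ℝ) ^ ((d:ℝ) + 1) * s ^ (β * n) := by
            apply mul_le_mul_of_nonneg_left _ (by positivity)
            exact Real.rpow_le_rpow_of_exponent_le hs1 hn
        _ = (2:ℝ) ^ ((d:ℝ) + 1) * (s ^ β) ^ n := by
            rw [Real.rpow_mul hs0.le, Real.rpow_natCast]
        _ ≤ (2:ℝ) ^ ((d:ℝ) + 1) * ((n.factorial : ℝ) / c ^ n * Real.exp (c * s ^ β)) := by
            apply mul_le_mul_of_nonneg_left hsn (by positivity)
        _ ≤ C * Real.exp (c * s ^ β) := by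
            rw [hC_def, h2d]
            have : (n.factorial : ℝ) / c ^ n ≤ K := by rw [hK_def]; linarith
            have hexp0 : (0:ℝ) < Real.exp (c * s ^ β) := Real.exp_pos _
            nlinarith [this, hexp0, (by positivity : (0:ℝ) < (2:ℝ) ^ (d+1:ℕ))]
  -- compare with the integrable function C * (1 + ‖ξ‖)^(-(d+1))
  have hint : Integrable (fun ξ : EuclideanSpace ℝ (Fin d) =>
      C * (1 + ‖ξ‖) ^ (-((d:ℝ) + 1))) := by
    apply Integrable.const_mul
    apply integrable_one_add_norm
    rw [finrank_euclideanSpace_fin]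
    linarith
  apply hint.mono
  · apply Measurable.aestronglyMeasurable
    exact (((measurable_norm.pow_const β).const_mul c).neg).exp
  · filter_upwards with ξ
    have hs : (0:ℝ) ≤ ‖ξ‖ := norm_nonneg ξ
    have hP : (0:ℝ) < (1 + ‖ξ‖) ^ ((d:ℝ) + 1) := Real.rpow_pos_of_pos (by linarith) _
    rw [Real.norm_eq_abs, Real.abs_exp, Real.norm_eq_abs]
    rw [abs_of_nonneg (by positivity)]
    rw [Real.rpow_neg (by linarith), ← div_eq_mul_inv, le_div_iff₀ hP]
    have hb := hbound ‖ξ‖ hs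
    have hE : (0:ℝ) < Real.exp (c * ‖ξ‖ ^ β) := Real.exp_pos _
    rw [Real.exp_neg]
    calc (Real.exp (c * ‖ξ‖ ^ β))⁻¹ * (1 + ‖ξ‖) ^ ((d:ℝ) + 1)
        ≤ (Real.exp (c * ‖ξ‖ ^ β))⁻¹ * (C * Real.exp (c * ‖ξ‖ ^ β)) :=
          mul_le_mul_of_nonneg_left hb (by positivity)
      _ = C := by field_simp

/-- The modulus of `(2π)^d · p_t^M(x,y)` is bounded by the sum of the Gaussian-regime
integral over `A₁ = {‖ξ‖² ≤ M^{2/α}}` and the α-stable-regime integral over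
`A₂ = {‖ξ‖² > M^{2/α}}`. -/
theorem stmt7 (α M : ℝ) (hα0 : 0 < α) (hα2 : α ≤ 2) (hM : 0 < M)
    (d : ℕ) (hd : 1 ≤ d) (t : ℝ) (ht : 0 < t)
    (x y : EuclideanSpace ℝ (Fin d)) (p : ℂ)
    (hp : p = ((((2 * Real.pi) ^ d)⁻¹ : ℝ) : ℂ) *
        ∫ ξ : EuclideanSpace ℝ (Fin d),
          Complex.exp (Complex.I * ((inner ℝ (x - y) ξ : ℝ) : ℂ)) *
            Complex.exp (-(((t * ((M ^ (2 / α) + ‖ξ‖ ^ 2) ^ (α / 2) - M)) : ℝ) : ℂ))) :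
    ‖((((2 * Real.pi) ^ d : ℝ)) : ℂ) * p‖ ≤
      (∫ ξ in {ξ : EuclideanSpace ℝ (Fin d) | ‖ξ‖ ^ 2 ≤ M ^ (2 / α)},
          Real.exp (-(α * t / (2 * (2 * M ^ (2 / α)) ^ (1 - α / 2))) * ‖ξ‖ ^ 2)) +
      ∫ ξ in {ξ : EuclideanSpace ℝ (Fin d) | ‖ξ‖ ^ 2 > M ^ (2 / α)},
          Real.exp (-(α * t / (2 : ℝ) ^ (2 - α / 2)) * ‖ξ‖ ^ α) := by
  have hπ : (0:ℝ) < (2 * Real.pi) ^ d := by positivity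
  rw [hp, ← mul_assoc, ← Complex.ofReal_mul, mul_inv_cancel₀ hπ.ne', Complex.ofReal_one, one_mul]
  refine le_trans (norm_integral_le_integral_norm _) ?_
  have hm : (0:ℝ) < M ^ (2 / α) := Real.rpow_pos_of_pos hM _
  have hc1 : (0:ℝ) < α * t / (2 * (2 * M ^ (2 / α)) ^ (1 - α / 2)) := by
    apply div_pos (by positivity)
    have : (0:ℝ) < (2 * M ^ (2 / α)) ^ (1 - α / 2) := Real.rpow_pos_of_pos (by linarith) _
    linarith
  have hc2 : (0:ℝ) < α * t / (2 : ℝ) ^ (2 - α / 2) := by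
    apply div_pos (by positivity)
    exact Real.rpow_pos_of_pos (by norm_num) _
  have hnormF : ∀ ξ : EuclideanSpace ℝ (Fin d),
      ‖Complex.exp (Complex.I * ((inner ℝ (x - y) ξ : ℝ) : ℂ)) *
        Complex.exp (-(((t * ((M ^ (2 / α) + ‖ξ‖ ^ 2) ^ (α / 2) - M)) : ℝ) : ℂ))‖ =
      Real.exp (-(t * ((M ^ (2 / α) + ‖ξ‖ ^ 2) ^ (α / 2) - M))) := by
    intro ξ
    rw [norm_mul, Complex.norm_exp, Complex.norm_exp]
    simp [Complex.mul_re]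
  simp only [hnormF]
  -- the two majorant pieces
  set A₁ : Set (EuclideanSpace ℝ (Fin d)) := {ξ | ‖ξ‖ ^ 2 ≤ M ^ (2 / α)} with hA₁_def
  set A₂ : Set (EuclideanSpace ℝ (Fin d)) := {ξ | ‖ξ‖ ^ 2 > M ^ (2 / α)} with hA₂_def
  have hA₁ : MeasurableSet A₁ := measurableSet_le (measurable_norm.pow_const 2) measurable_const
  have hA₂ : MeasurableSet A₂ := measurableSet_lt measurable_const (measurable_norm.pow_const 2)
  set h₁ : EuclideanSpace ℝ (Fin d) → ℝ :=
    fun ξ => Real.exp (-(α * t / (2 * (2 * M ^ (2 / α)) ^ (1 - α / 2))) * ‖ξ‖ ^ 2) with hh₁_def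
  set h₂ : EuclideanSpace ℝ (Fin d) → ℝ :=
    fun ξ => Real.exp (-(α * t / (2 : ℝ) ^ (2 - α / 2)) * ‖ξ‖ ^ α) with hh₂_def
  have hInt₁ : Integrable (A₁.indicator h₁) := by
    refine IntegrableOn.integrable_indicator ?_ hA₁
    refine Measure.integrableOn_of_bounded (M := 1) ?_ ?_ ?_
    · have hsub : A₁ ⊆ Metric.closedBall 0 (Real.sqrt (M ^ (2 / α))) := by
        intro ξ hξ
        simp only [Metric.mem_closedBall, dist_zero_right]
        have h1 : ‖ξ‖ ^ 2 ≤ Real.sqrt (M ^ (2 / α)) ^ 2 := by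
          rw [Real.sq_sqrt hm.le]; exact hξ
        exact le_of_pow_le_pow_left₀ two_ne_zero (Real.sqrt_nonneg _) h1
      exact ((measure_mono hsub).trans_lt (measure_closedBall_lt_top)).ne
    · exact (((measurable_norm.pow_const 2).const_mul _).exp).aestronglyMeasurable
    · filter_upwards with ξ
      rw [Real.norm_eq_abs, Real.abs_exp]
      apply Real.exp_le_one_iff.mpr
      have := sq_nonneg ‖ξ‖
      nlinarith [hc1]
  have hInt₂ : Integrable (A₂.indicator h₂) := by
    refine IntegrableOn.integrable_indicator ?_ hA₂
    rw [hh₂_def]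
    simp only [neg_mul]
    exact (integrable_exp_neg_mul_rpow7 d hc2 hα0).integrableOn
  have hle : ∀ ξ : EuclideanSpace ℝ (Fin d),
      Real.exp (-(t * ((M ^ (2 / α) + ‖ξ‖ ^ 2) ^ (α / 2) - M))) ≤
        A₁.indicator h₁ ξ + A₂.indicator h₂ ξ := by
    intro ξ
    by_cases hξ : ‖ξ‖ ^ 2 ≤ M ^ (2 / α)
    · rw [Set.indicator_of_mem (show ξ ∈ A₁ from hξ) h₁,
        Set.indicator_of_notMem (show ξ ∉ A₂ from not_lt.mpr hξ) h₂, add_zero]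
      apply Real.exp_le_exp.mpr
      have hk := case1_bound7 hα0 hα2 hM (by positivity : (0:ℝ) ≤ ‖ξ‖ ^ 2) hξ
      have h2 := mul_le_mul_of_nonneg_left hk ht.le
      have heq : α * t / (2 * (2 * M ^ (2 / α)) ^ (1 - α / 2)) * ‖ξ‖ ^ 2 =
          t * (α * ‖ξ‖ ^ 2 / (2 * (2 * M ^ (2 / α)) ^ (1 - α / 2))) := by ring
      simp only [hh₁_def, neg_mul]
      linarith
    · push_neg at hξ
      rw [Set.indicator_of_notMem (show ξ ∉ A₁ from not_le.mpr hξ) h₁,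
        Set.indicator_of_mem (show ξ ∈ A₂ from hξ) h₂, zero_add]
      apply Real.exp_le_exp.mpr
      have hk := case2_bound7 hα0 hα2 hM hξ
      have hpow : ((‖ξ‖ : ℝ) ^ 2) ^ (α / 2) = ‖ξ‖ ^ α := by
        rw [← Real.rpow_natCast ‖ξ‖ 2, ← Real.rpow_mul (norm_nonneg ξ)]
        congr 1
        push_cast
        ring
      rw [hpow] at hk
      have h2 := mul_le_mul_of_nonneg_left hk ht.le
      have heq : α * t / (2 : ℝ) ^ (2 - α / 2) * ‖ξ‖ ^ α =
          t * (α * ‖ξ‖ ^ α / (2 : ℝ) ^ (2 - α / 2)) := by ring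
      simp only [hh₂_def, neg_mul]
      linarith
  calc ∫ ξ : EuclideanSpace ℝ (Fin d),
        Real.exp (-(t * ((M ^ (2 / α) + ‖ξ‖ ^ 2) ^ (α / 2) - M)))
      ≤ ∫ ξ, (A₁.indicator h₁ ξ + A₂.indicator h₂ ξ) :=
        integral_mono_of_nonneg (Filter.Eventually.of_forall fun ξ => (Real.exp_pos _).le)
          (hInt₁.add hInt₂) (Filter.Eventually.of_forall hle)
    _ = (∫ ξ, A₁.indicator h₁ ξ) + ∫ ξ, A₂.indicator h₂ ξ := integral_add hInt₁ hInt₂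
    _ = (∫ ξ in A₁, h₁ ξ) + ∫ ξ in A₂, h₂ ξ := by
        rw [integral_indicator hA₁, integral_indicator hA₂]
end
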